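/- Let A be a ring with property (SF). Let N be a free A-module and M a submodule of N. Then the following are equivalent: (1) there exist an index type ι, a basis (b_i)_{i∈ι} of N and a subset S ⊆ ι such that M is the span of {b_i : i ∈ S}; (2) the quotient module N/M is a free A-module; (3) there exists an A-linear map τ : N → M such that τ(x) = x for every x ∈ M. -/

import Mathlib

universe u v

/-- Property (SF): every submodule of every free `A`-module is a free `A`-module. -/
def HasSF (A : Type u) [Ring A] : Prop :=
  ∀ (M : Type v) [AddCommGroup M] [Module A M], Module.Free A M →
    ∀ N : Submodule A M, Module.Free A ↥N

/-- `M` is a free factor of `N` (written `M ≤* N`): `M ≤ N` and there is a submodule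
`M' ≤ N` with `M ⊓ M' = ⊥` and `M ⊔ M' = N` such that `M'` is a free module. -/
def IsFreeFactor {A : Type*} [Ring A] {P : Type*} [AddCommGroup P] [Module A P]
    (M N : Submodule A P) : Prop :=
  M ≤ N ∧ ∃ M' : Submodule A P, M' ≤ N ∧ M ⊓ M' = ⊥ ∧ M ⊔ M' = N ∧ Module.Free A ↥M'

/-- The extension `M ≤ N` is algebraic: the only submodule `L` with `M ≤ L ≤ N`
which is a free factor of `N` is `L = N`. -/
def IsAlgExt {A : Type*} [Ring A] {P : Type*} [AddCommGroup P] [Module A P]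
    (M N : Submodule A P) : Prop :=
  M ≤ N ∧ ∀ L : Submodule A P, M ≤ L → IsFreeFactor L N → L = N

/-- (2) → (3): if the quotient is free (hence projective), the quotient map splits and
we obtain a retraction onto `M`. -/
theorem freeFactor_aux23 {A : Type u} [Ring A] (N : Type v) [AddCommGroup N] [Module A N]
    (M : Submodule A N) (h : Module.Free A (N ⧸ M)) :
    ∃ τ : N →ₗ[A] ↥M, ∀ x : ↥M, τ (x : N) = x := by
  obtain ⟨s, hs⟩ := Module.projective_lifting_property M.mkQ (LinearMap.id) M.mkQ_surjective
  set f : N →ₗ[A] N := LinearMap.id - s.comp M.mkQ with hf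
  have hmem : ∀ x : N, f x ∈ M := by
    intro x
    have : M.mkQ (f x) = 0 := by
      simp only [hf, LinearMap.sub_apply, LinearMap.id_apply, LinearMap.comp_apply, map_sub]
      rw [← LinearMap.comp_apply M.mkQ s, hs]
      simp
    rwa [Submodule.mkQ_apply, Submodule.Quotient.mk_eq_zero] at this
  refine ⟨f.codRestrict M hmem, fun x => ?_⟩
  apply Subtype.ext
  have hx : M.mkQ (x : N) = 0 := by
    rw [Submodule.mkQ_apply, Submodule.Quotient.mk_eq_zero]; exact x.2
  simp [hf, LinearMap.codRestrict_apply, hx]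

/-- (1) → (3): a retraction onto the span of a part of a basis. -/
theorem freeFactor_aux13 {A : Type u} [Ring A] (N : Type v) [AddCommGroup N] [Module A N]
    (M : Submodule A N) (ι : Type v) (b : Module.Basis ι A N) (S : Set ι)
    (hM : M = Submodule.span A (b '' S)) :
    ∃ τ : N →ₗ[A] ↥M, ∀ x : ↥M, τ (x : N) = x := by
  classical
  refine ⟨b.constr ℕ
    (fun i => if h : i ∈ S then ⟨b i, hM ▸ Submodule.subset_span ⟨i, h, rfl⟩⟩ else 0),
    fun x => ?_⟩
  set τ := b.constr ℕ (fun i => if h : i ∈ S then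
    (⟨b i, hM ▸ Submodule.subset_span ⟨i, h, rfl⟩⟩ : ↥M) else 0) with hτ
  have key : ∀ y ∈ Submodule.span A (b '' S), ((τ y : ↥M) : N) = y := by
    intro y hy
    induction hy using Submodule.span_induction with
    | mem z hz =>
        obtain ⟨i, hi, rfl⟩ := hz
        rw [hτ, Module.Basis.constr_basis]
        simp [dif_pos hi]
    | zero => simp
    | add y z _ _ hy hz => simp [hy, hz]
    | smul a y _ hy => simp [hy]
  exact Subtype.ext (key x (hM ▸ x.2))

/-- (3) → (1): a retraction onto `M` yields a basis of `N` adapted to `M`. -/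
theorem freeFactor_aux31 {A : Type u} [Ring A] (hSF : HasSF.{u, v} A)
    (N : Type v) [AddCommGroup N] [Module A N] [Module.Free A N]
    (M : Submodule A N) (τ : N →ₗ[A] ↥M) (hτ : ∀ x : ↥M, τ (x : N) = x) :
    ∃ (ι : Type v) (b : Module.Basis ι A N) (S : Set ι), M = Submodule.span A (b '' S) := by
  have hc : IsCompl M (LinearMap.ker τ) := LinearMap.isCompl_of_proj hτ
  haveI hMfree : Module.Free A ↥M := hSF N inferInstance M
  haveI hCfree : Module.Free A ↥(LinearMap.ker τ) := hSF N inferInstance _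
  set bM := Module.Free.chooseBasis A ↥M
  set bC := Module.Free.chooseBasis A ↥(LinearMap.ker τ)
  set b := (bM.prod bC).map (Submodule.prodEquivOfIsCompl M (LinearMap.ker τ) hc) with hb
  refine ⟨_, b, Set.range Sum.inl, ?_⟩
  have happ : ∀ i, b (Sum.inl i) = ((bM i : N)) := by
    intro i
    simp [hb, Module.Basis.map_apply, Module.Basis.prod_apply, Submodule.coe_prodEquivOfIsCompl']
  have himg : b '' (Set.range Sum.inl) = Subtype.val '' Set.range ⇑bM := by
    rw [← Set.range_comp, ← Set.range_comp]
    ext x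
    constructor
    · rintro ⟨i, rfl⟩; exact ⟨i, (happ i).symm⟩
    · rintro ⟨i, rfl⟩; exact ⟨i, happ i⟩
  rw [himg, show Subtype.val '' Set.range ⇑bM = ⇑M.subtype '' Set.range ⇑bM from rfl,
      ← Submodule.map_span, bM.span_eq, Submodule.map_top, Submodule.range_subtype]

/-- (3) → (2): a retraction onto `M` gives a free complement, isomorphic to the quotient. -/
theorem freeFactor_aux32 {A : Type u} [Ring A] (hSF : HasSF.{u, v} A)
    (N : Type v) [AddCommGroup N] [Module A N] [Module.Free A N]
    (M : Submodule A N) (τ : N →ₗ[A] ↥M) (hτ : ∀ x : ↥M, τ (x : N) = x) :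
    Module.Free A (N ⧸ M) := by
  have hc : IsCompl M (LinearMap.ker τ) := LinearMap.isCompl_of_proj hτ
  haveI hCfree : Module.Free A ↥(LinearMap.ker τ) := hSF N inferInstance _
  exact Module.Free.of_equiv (Submodule.quotientEquivOfIsCompl M (LinearMap.ker τ) hc).symm

theorem freeFactor_tfae {A : Type u} [Ring A] (hSF : HasSF.{u, v} A)
    (N : Type v) [AddCommGroup N] [Module A N] [Module.Free A N]
    (M : Submodule A N) :
    ((∃ (ι : Type v) (b : Module.Basis ι A N) (S : Set ι), M = Submodule.span A (b '' S)) ↔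
      Module.Free A (N ⧸ M)) ∧
    (Module.Free A (N ⧸ M) ↔
      ∃ τ : N →ₗ[A] ↥M, ∀ x : ↥M, τ (x : N) = x) := by
  constructor
  · constructor
    · rintro ⟨ι, b, S, hM⟩
      obtain ⟨τ, hτ⟩ := freeFactor_aux13 N M ι b S hM
      exact freeFactor_aux32 hSF N M τ hτ
    · intro h
      obtain ⟨τ, hτ⟩ := freeFactor_aux23 N M h
      exact freeFactor_aux31 hSF N M τ hτ
  · constructor
    · exact freeFactor_aux23 N M
    · rintro ⟨τ, hτ⟩
      exact freeFactor_aux32 hSF N M τ hτ
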